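/- Let W_m, W_s > 0, let β₀, n₁, n₀, β_mx, β_my, σ_m, σ_s, β_sy ∈ ℝ with β_mx ≠ 0, β_my ≠ 0, σ_m > 0, and σ_s² + β_my² ≠ 0. Define E_m : ℝ → ℝ by E_m(y) = cos(β_my y) for |y| ≤ W_m/2 and E_m(y) = cos(β_my W_m/2) e^{-σ_m(|y| - W_m/2)} for |y| > W_m/2, and define E_u : ℝ → ℝ by E_u(y) = cos(β_sy W_s/2) e^{-σ_s(W_m/2 - y)}. Then the coupling coefficient κ_m := (β₀² (n₁² - n₀²) / (2 β_mx)) · (∫_{-W_m/2}^{W_m/2} E_m(y) E_u(y) dy) / (∫_{-∞}^{∞} E_m(y)² dy) satisfies κ_m = (β₀² (n₁² - n₀²) / (2 β_mx)) · e^{-σ_s W_m/2} cos(β_sy W_s/2) · ( 2 σ_s cos(β_my W_m/2) sinh(σ_s W_m/2) + 2 β_my sin(β_my W_m/2) cosh(σ_s W_m/2) ) / ( (σ_s² + β_my²) · ( W_m/2 + sin(β_my W_m)/(2 β_my) + cos²(β_my W_m/2)/σ_m ) ). -/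

import Mathlib

open MeasureTheory Set Filter Topology

lemma tail_integrable {σ : ℝ} (a : ℝ) (hσ : 0 < σ) :
    IntegrableOn (fun x : ℝ => Real.exp (-σ * (x - a))) (Ioi a) := by
  have h := (exp_neg_integrableOn_Ioi a hσ).const_mul (Real.exp (σ * a))
  refine IntegrableOn.congr_fun h (fun x _ => ?_) measurableSet_Ioi
  rw [← Real.exp_add]; ring_nf

lemma tail_integral {σ : ℝ} (a : ℝ) (hσ : 0 < σ) :
    ∫ x in Ioi a, Real.exp (-σ * (x - a)) = 1 / σ := by
  have hderiv : ∀ x ∈ Ici a,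
      HasDerivAt (fun x => -Real.exp (-σ * (x - a)) / σ) (Real.exp (-σ * (x - a))) x := by
    intro x _
    have h1 : HasDerivAt (fun x : ℝ => -σ * (x - a)) (-σ) x := by
      simpa using ((hasDerivAt_id x).sub_const a).const_mul (-σ)
    have h2 := (h1.exp.neg).div_const σ
    refine h2.congr_deriv ?_
    field_simp
  have htend : Tendsto (fun x => -Real.exp (-σ * (x - a)) / σ) atTop (𝓝 0) := by
    have h1 : Tendsto (fun x : ℝ => -σ * (x - a)) atTop atBot := by
      have : Tendsto (fun x : ℝ => σ * (x - a)) atTop atTop :=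
        (tendsto_atTop_add_const_right _ (-a) tendsto_id).const_mul_atTop hσ
      simpa [Function.comp_def, neg_mul] using tendsto_neg_atTop_atBot.comp this
    have := (Real.tendsto_exp_atBot.comp h1).neg.div_const σ
    simpa using this
  have := integral_Ioi_of_hasDerivAt_of_nonneg' hderiv
    (fun x _ => (Real.exp_pos _).le) htend
  rw [this]; simp [div_eq_mul_inv]

lemma num_integral (a σ b C : ℝ) (hden : σ ^ 2 + b ^ 2 ≠ 0) :
    ∫ y in (-a)..a, Real.cos (b * y) * (C * Real.exp (-σ * (a - y))) =
      C * Real.exp (-(σ * a)) *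
        (2 * σ * Real.cos (b * a) * Real.sinh (σ * a) +
          2 * b * Real.sin (b * a) * Real.cosh (σ * a)) / (σ ^ 2 + b ^ 2) := by
  have hF : ∀ y ∈ uIcc (-a) a, HasDerivAt
      (fun y => C * Real.exp (-(σ * a)) *
        (Real.exp (σ * y) * (σ * Real.cos (b * y) + b * Real.sin (b * y)) / (σ ^ 2 + b ^ 2)))
      (Real.cos (b * y) * (C * Real.exp (-σ * (a - y)))) y := by
    intro y _
    have hby : HasDerivAt (fun y : ℝ => b * y) b y := by
      simpa using (hasDerivAt_id y).const_mul b
    have hσy : HasDerivAt (fun y : ℝ => σ * y) σ y := by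
      simpa using (hasDerivAt_id y).const_mul σ
    have hexp := hσy.exp
    have hg := (hby.cos.const_mul σ).add (hby.sin.const_mul b)
    have h := (((hexp.mul hg).div_const (σ ^ 2 + b ^ 2)).const_mul (C * Real.exp (-(σ * a))))
    refine h.congr_deriv ?_
    rw [show -σ * (a - y) = -(σ * a) + σ * y by ring, Real.exp_add]
    simp only [Pi.add_apply]
    field_simp
    ring
  have hcont : Continuous fun y => Real.cos (b * y) * (C * Real.exp (-σ * (a - y))) := by
    fun_prop
  rw [intervalIntegral.integral_eq_sub_of_hasDerivAt hF
    (hcont.intervalIntegrable _ _)]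
  simp only [mul_neg, Real.cos_neg, Real.sin_neg, Real.sinh_eq, Real.cosh_eq, Real.exp_neg]
  field_simp
  ring

lemma cossq_integral (a b : ℝ) (hb : b ≠ 0) :
    ∫ y in (-a)..a, Real.cos (b * y) ^ 2 = a + Real.sin (2 * b * a) / (2 * b) := by
  have hF : ∀ y ∈ uIcc (-a) a, HasDerivAt
      (fun y => y / 2 + Real.sin (2 * b * y) / (4 * b)) (Real.cos (b * y) ^ 2) y := by
    intro y _
    have h2by : HasDerivAt (fun y : ℝ => 2 * b * y) (2 * b) y := by
      simpa using (hasDerivAt_id y).const_mul (2 * b)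
    have h := ((hasDerivAt_id y).div_const 2).add ((h2by.sin).div_const (4 * b))
    refine h.congr_deriv ?_
    rw [Real.cos_sq, show 2 * (b * y) = 2 * b * y by ring]
    field_simp
    ring
  have hcont : Continuous fun y => Real.cos (b * y) ^ 2 := by fun_prop
  rw [intervalIntegral.integral_eq_sub_of_hasDerivAt hF (hcont.intervalIntegrable _ _)]
  simp only [mul_neg, Real.sin_neg]
  field_simp
  ring

lemma den_value (Wm Ws β0 n1 n0 βmx βmy σm σs βsy : ℝ)
    (hWm : 0 < Wm) (hWs : 0 < Ws) (hβmx : βmx ≠ 0) (hβmy : βmy ≠ 0)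
    (hσm : 0 < σm) (hden : σs ^ 2 + βmy ^ 2 ≠ 0)
    (Em Eu : ℝ → ℝ)
    (hcore : ∀ y : ℝ, |y| ≤ Wm / 2 → Em y = Real.cos (βmy * y))
    (hclad : ∀ y : ℝ, |y| > Wm / 2 →
      Em y = Real.cos (βmy * Wm / 2) * Real.exp (-σm * (|y| - Wm / 2)))
    (hEu : ∀ y : ℝ, Eu y = Real.cos (βsy * Ws / 2) * Real.exp (-σs * (Wm / 2 - y))) :
    (∫ y : ℝ, Em y ^ 2) =
      Wm / 2 + Real.sin (βmy * Wm) / (2 * βmy) + Real.cos (βmy * (Wm / 2)) ^ 2 / σm := by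
  have ha : 0 < Wm / 2 := by linarith
  set a := Wm / 2 with hadef
  set K := Real.cos (βmy * (Wm / 2)) with hK
  have h2σm : 0 < 2 * σm := by linarith
  have hKclad : Real.cos (βmy * Wm / 2) = K := by rw [hK, mul_div_assoc]
  have hexp2 : ∀ t : ℝ, Real.exp t ^ 2 = Real.exp (2 * t) := by
    intro t; rw [sq, ← Real.exp_add]; ring_nf
  -- right tail
  have hEqIoi : EqOn (fun x => K ^ 2 * Real.exp (-(2 * σm) * (x - a)))
      (fun x => Em x ^ 2) (Ioi a) := by
    intro x hx
    have hx' : |x| > a := by rw [abs_of_pos (lt_trans ha hx)]; exact hx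
    simp only
    rw [hclad x hx', hKclad, abs_of_pos (lt_trans ha hx), mul_pow, hexp2]
    ring_nf
  have hIoiInt : IntegrableOn (fun x => Em x ^ 2) (Ioi a) :=
    IntegrableOn.congr_fun ((tail_integrable a h2σm).const_mul (K ^ 2)) hEqIoi measurableSet_Ioi
  have hIoiVal : ∫ x in Ioi a, Em x ^ 2 = K ^ 2 * (1 / (2 * σm)) := by
    rw [← setIntegral_congr_fun measurableSet_Ioi hEqIoi, integral_const_mul, tail_integral a h2σm]
  -- left tail
  have hEqIic : EqOn (fun x => K ^ 2 * Real.exp (-(2 * σm) * (-x - a)))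
      (fun x => Em x ^ 2) (Iic (-a)) := by
    intro x hx
    simp only
    rcases lt_or_eq_of_le (mem_Iic.1 hx) with h | h
    · have hxneg : x < 0 := by linarith
      have hx' : |x| > a := by rw [abs_of_neg hxneg]; linarith
      rw [hclad x hx', hKclad, abs_of_neg hxneg, mul_pow, hexp2]
      ring_nf
    · subst h
      rw [hcore (-a) (by rw [abs_neg, abs_of_pos ha]), mul_neg, Real.cos_neg, ← hK]
      simp
  have hIicInt : IntegrableOn (fun x => Em x ^ 2) (Iic (-a)) := by
    have hf : IntegrableOn (fun x => K ^ 2 * Real.exp (-(2 * σm) * (x - a))) (Ioi a) :=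
      (tail_integrable a h2σm).const_mul (K ^ 2)
    have hneg : IntegrableOn
        (fun x => K ^ 2 * Real.exp (-(2 * σm) * (-x - a))) (Iio (-a)) := by
      have := (MeasurePreserving.integrableOn_comp_preimage
        (Measure.measurePreserving_neg (volume : Measure ℝ))
        (Homeomorph.neg ℝ).measurableEmbedding).2 hf
      simpa [Function.comp_def] using this
    have hneg' : IntegrableOn
        (fun x => K ^ 2 * Real.exp (-(2 * σm) * (-x - a))) (Iic (-a)) := by
      rw [IntegrableOn, ← Measure.restrict_congr_set Iio_ae_eq_Iic]
      exact hneg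
    exact IntegrableOn.congr_fun hneg' hEqIic measurableSet_Iic
  have hIicVal : ∫ x in Iic (-a), Em x ^ 2 = K ^ 2 * (1 / (2 * σm)) := by
    rw [← setIntegral_congr_fun measurableSet_Iic hEqIic]
    have := integral_comp_neg_Iic (-a) (fun x => K ^ 2 * Real.exp (-(2 * σm) * (x - a)))
    simp only [neg_neg] at this
    rw [show (fun x => K ^ 2 * Real.exp (-(2 * σm) * (-x - a)))
        = (fun x => K ^ 2 * Real.exp (-(2 * σm) * (x - a))) ∘ Neg.neg from rfl] at *
    calc (∫ x in Iic (-a), K ^ 2 * Real.exp (-(2 * σm) * (-x - a)))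
        = ∫ x in Ioi a, K ^ 2 * Real.exp (-(2 * σm) * (x - a)) := this
      _ = K ^ 2 * (1 / (2 * σm)) := by rw [integral_const_mul, tail_integral a h2σm]
  -- core
  have hEqIoc : EqOn (fun x => Real.cos (βmy * x) ^ 2) (fun x => Em x ^ 2) (Ioc (-a) a) := by
    intro x hx
    simp only
    rw [hcore x (abs_le.2 ⟨hx.1.le, hx.2⟩)]
  have hIocInt : IntegrableOn (fun x => Em x ^ 2) (Ioc (-a) a) := by
    have hc : Continuous fun x => Real.cos (βmy * x) ^ 2 := by fun_prop
    exact IntegrableOn.congr_fun (hc.integrableOn_Ioc) hEqIoc measurableSet_Ioc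
  have hIicaInt : IntegrableOn (fun x => Em x ^ 2) (Iic a) := by
    rw [← Iic_union_Ioc_eq_Iic (by linarith : -a ≤ a)]
    exact hIicInt.union hIocInt
  have hIntervalVal : ∫ x in (-a)..a, Em x ^ 2 = a + Real.sin (2 * βmy * a) / (2 * βmy) := by
    have hco : ∀ x ∈ uIcc (-a) a, Em x ^ 2 = Real.cos (βmy * x) ^ 2 := by
      intro x hx
      rw [uIcc_of_le (by linarith : -a ≤ a)] at hx
      rw [hcore x (abs_le.2 ⟨hx.1, hx.2⟩)]
    rw [intervalIntegral.integral_congr hco]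
    exact cossq_integral a βmy hβmy
  have hsplit1 := intervalIntegral.integral_Iic_add_Ioi hIicaInt hIoiInt
  have hsplit2 := intervalIntegral.integral_Iic_sub_Iic hIicInt hIicaInt
  have h2 : 2 * βmy * a = βmy * Wm := by rw [hadef]; ring
  rw [h2] at hIntervalVal
  have h3 : ∫ x in Iic a, Em x ^ 2
      = (∫ x in (-a)..a, Em x ^ 2) + ∫ x in Iic (-a), Em x ^ 2 := by linarith
  rw [← hsplit1, h3, hIoiVal, hIicVal, hIntervalVal]
  have hσm' : σm ≠ 0 := ne_of_gt hσm
  field_simp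
  ring

lemma coupling_alg (P C E T S D : ℝ) :
    P * (C * E * T / S) / D = P * E * C * T / (S * D) := by
  rw [← mul_div_assoc, div_div]
  congr 1
  ring

/-- Theorem 1 of the paper (eq. (7)): closed form for the coupling coefficient
between the main waveguide and each symmetrically attached pinching antenna. -/
theorem coupling_coefficient_closed_form
    (Wm Ws β0 n1 n0 βmx βmy σm σs βsy : ℝ)
    (hWm : 0 < Wm) (hWs : 0 < Ws) (hβmx : βmx ≠ 0) (hβmy : βmy ≠ 0)
    (hσm : 0 < σm) (hden : σs ^ 2 + βmy ^ 2 ≠ 0)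
    (Em Eu : ℝ → ℝ)
    (hcore : ∀ y : ℝ, |y| ≤ Wm / 2 → Em y = Real.cos (βmy * y))
    (hclad : ∀ y : ℝ, |y| > Wm / 2 →
      Em y = Real.cos (βmy * Wm / 2) * Real.exp (-σm * (|y| - Wm / 2)))
    (hEu : ∀ y : ℝ, Eu y = Real.cos (βsy * Ws / 2) * Real.exp (-σs * (Wm / 2 - y))) :
    (β0 ^ 2 * (n1 ^ 2 - n0 ^ 2) / (2 * βmx)) *
        (∫ y in (-(Wm / 2))..(Wm / 2), Em y * Eu y) / (∫ y : ℝ, Em y ^ 2) =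
      (β0 ^ 2 * (n1 ^ 2 - n0 ^ 2) / (2 * βmx)) * Real.exp (-σs * Wm / 2) *
        Real.cos (βsy * Ws / 2) *
        (2 * σs * Real.cos (βmy * Wm / 2) * Real.sinh (σs * Wm / 2) +
          2 * βmy * Real.sin (βmy * Wm / 2) * Real.cosh (σs * Wm / 2)) /
        ((σs ^ 2 + βmy ^ 2) *
          (Wm / 2 + Real.sin (βmy * Wm) / (2 * βmy) +
            Real.cos (βmy * Wm / 2) ^ 2 / σm)) := by
  have ha : 0 < Wm / 2 := by linarith
  have h1 : σs * Wm / 2 = σs * (Wm / 2) := by ring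
  have h2 : -σs * Wm / 2 = -(σs * (Wm / 2)) := by ring
  have h3 : βmy * Wm / 2 = βmy * (Wm / 2) := by ring
  rw [h2, h1, h3]
  have hnum : (∫ y in (-(Wm / 2))..(Wm / 2), Em y * Eu y) =
      Real.cos (βsy * Ws / 2) * Real.exp (-(σs * (Wm / 2))) *
        (2 * σs * Real.cos (βmy * (Wm / 2)) * Real.sinh (σs * (Wm / 2)) +
          2 * βmy * Real.sin (βmy * (Wm / 2)) * Real.cosh (σs * (Wm / 2))) /
        (σs ^ 2 + βmy ^ 2) := by
    have hco : ∀ y ∈ uIcc (-(Wm / 2)) (Wm / 2), Em y * Eu y =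
        Real.cos (βmy * y) * (Real.cos (βsy * Ws / 2) * Real.exp (-σs * (Wm / 2 - y))) := by
      intro y hy
      rw [uIcc_of_le (by linarith : -(Wm / 2) ≤ Wm / 2)] at hy
      rw [hcore y (abs_le.2 ⟨hy.1, hy.2⟩), hEu y]
    rw [intervalIntegral.integral_congr hco]
    exact num_integral (Wm / 2) σs βmy (Real.cos (βsy * Ws / 2)) hden
  rw [hnum, den_value Wm Ws β0 n1 n0 βmx βmy σm σs βsy hWm hWs hβmx hβmy hσm hden
    Em Eu hcore hclad hEu]
  exact coupling_alg _ _ _ _ _ _
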